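/- Let G = ℤ/2ℤ and let L : G → G be the identity labeling function (the Jukes-Cantor binary model in Fourier coordinates). For every binary rooted tree T, the ideal I_{T,L} is generated by homogeneous polynomials of degree 2. -/

import Mathlib

open MvPolynomial

attribute [local instance] Classical.propDecidable

/-- A finite rooted tree, given by a parent function on a finite vertex set. -/
structure PhyloTree where
  V : Type
  fintypeV : Fintype V
  root : V
  parent : V → V
  parent_root : parent root = root
  reaches_root : ∀ v, ∃ n : ℕ, parent^[n] v = root

attribute [instance] PhyloTree.fintypeV

namespace PhyloTree

variable (T : PhyloTree)

/-- A vertex is a leaf if it has no children. -/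
def IsLeaf (v : T.V) : Prop := ∀ u, T.parent u = v → u = v

/-- The type of leaves of `T`. -/
def Leaf : Type := {v : T.V // T.IsLeaf v}

noncomputable instance : Fintype T.Leaf :=
  have : DecidablePred T.IsLeaf := Classical.decPred _
  Subtype.fintype _

/-- `u` is a (weak) descendant of `v`. -/
def Desc (u v : T.V) : Prop := ∃ n : ℕ, T.parent^[n] u = v

/-- The edges of `T` are indexed by its vertices: a vertex `v` indexes the edge from
`parent v` to `v`, and the root indexes the extra pendant root edge `e_r`.
`leavesBelow v` is the set `Λ(e)` of leaves below the edge indexed by `v`. -/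
noncomputable def leavesBelow (v : T.V) : Finset T.Leaf :=
  Finset.univ.filter fun l => T.Desc l.1 v

/-- `T` is a binary tree: every non-leaf vertex has exactly two children. -/
def IsBinary : Prop :=
  ∀ v : T.V, ¬ T.IsLeaf v →
    (Finset.univ.filter fun u => T.parent u = v ∧ u ≠ v).card = 2

variable {G 𝓛 : Type} [AddCommGroup G] [Fintype G]

/-- `g(e)`: the sum of the group elements at the leaves below the edge `e`. -/
noncomputable def gsum (g : T.Leaf → G) (e : T.V) : G := ∑ l ∈ T.leavesBelow e, g l

/-- The monomial parameterization in Fourier coordinates: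
`q_g ↦ ∏_{e ∈ E(T)} a^{(e)}_{L(g(e))}`. -/
noncomputable def Phi (L : G → 𝓛) :
    MvPolynomial (T.Leaf → G) ℂ →ₐ[ℂ] MvPolynomial (T.V × 𝓛) ℂ :=
  aeval fun g => ∏ e : T.V, X (e, L (T.gsum g e))

/-- The ideal `I_{T,L}` of phylogenetic invariants in Fourier coordinates. -/
noncomputable def idealTL (L : G → 𝓛) : Ideal (MvPolynomial (T.Leaf → G) ℂ) :=
  RingHom.ker (T.Phi L)

variable {T : PhyloTree}

lemma iterate_root (n : ℕ) : T.parent^[n] T.root = T.root :=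
  Function.iterate_fixed T.parent_root n

lemma desc_refl (v : T.V) : T.Desc v v := ⟨0, rfl⟩

lemma desc_trans {u v w : T.V} (h1 : T.Desc u v) (h2 : T.Desc v w) : T.Desc u w := by
  obtain ⟨a, ha⟩ := h1; obtain ⟨b, hb⟩ := h2
  exact ⟨b + a, by rw [Function.iterate_add_apply, ha, hb]⟩

lemma desc_root (v : T.V) : T.Desc v T.root := T.reaches_root v

lemma parent_desc (u : T.V) : T.Desc u (T.parent u) := ⟨1, rfl⟩

lemma eq_root_of_cycle {v : T.V} {k : ℕ} (hk : 1 ≤ k) (h : T.parent^[k] v = v) :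
    v = T.root := by
  obtain ⟨n, hn⟩ := T.reaches_root v
  have hmul : ∀ m : ℕ, T.parent^[k * m] v = v := by
    intro m
    induction m with
    | zero => simp
    | succ m ih =>
      have : k * (m+1) = k * m + k := by ring
      rw [this, Function.iterate_add_apply, h, ih]
  have h1 : T.parent^[k * n] v = v := hmul n
  have h2 : k * n = (k * n - n) + n := by
    have : n ≤ k * n := Nat.le_mul_of_pos_left n hk
    omega
  rw [h2, Function.iterate_add_apply, hn, iterate_root] at h1
  exact h1.symm

lemma leaf_desc {v u : T.V} (hv : T.IsLeaf v) (h : T.Desc u v) : u = v := by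
  obtain ⟨n, hn⟩ := h
  induction n generalizing u with
  | zero => exact hn
  | succ n ih =>
    rw [Function.iterate_succ_apply] at hn
    have := ih hn
    -- this : parent^[n] (parent u) = v gave parent u = v
    exact hv u this

lemma desc_comparable {l u v : T.V} (h1 : T.Desc l u) (h2 : T.Desc l v) :
    T.Desc u v ∨ T.Desc v u := by
  obtain ⟨a, ha⟩ := h1; obtain ⟨b, hb⟩ := h2
  rcases le_total a b with hab | hab
  · left; exact ⟨b - a, by rw [← ha, ← Function.iterate_add_apply, Nat.sub_add_cancel hab, hb]⟩
  · right; exact ⟨a - b, by rw [← hb, ← Function.iterate_add_apply, Nat.sub_add_cancel hab, ha]⟩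

lemma child_not_anc {v c : T.V} (hc : T.parent c = v) (hne : c ≠ v) : ¬ T.Desc v c := by
  rintro ⟨k, hk⟩
  have hcycle : T.parent^[k + 1] c = c := by
    rw [Function.iterate_succ_apply, hc, hk]
  have hcr : c = T.root := eq_root_of_cycle (by omega) hcycle
  have : v = T.root := by rw [← hc, hcr, T.parent_root]
  exact hne (hcr.trans this.symm)

lemma first_hit {u v : T.V} (h : T.Desc u v) (hne : u ≠ v) :
    ∃ c, T.parent c = v ∧ c ≠ v ∧ T.Desc u c := by
  have hex : ∃ n, T.parent^[n] u = v := h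
  classical
  let n := Nat.find hex
  have hn : T.parent^[n] u = v := Nat.find_spec hex
  have hn0 : n ≠ 0 := by
    intro h0
    exact hne (by simpa [h0] using hn)
  refine ⟨T.parent^[n-1] u, ?_, ?_, ⟨n-1, rfl⟩⟩
  · have h1 : T.parent^[(n-1)+1] u = v := by
      have : n - 1 + 1 = n := by omega
      rw [this]; exact hn
    rw [Function.iterate_succ_apply'] at h1; exact h1
  · intro heq
    have := Nat.find_min hex (m := n - 1) (by omega)
    exact this heq

lemma leavesBelow_mono {u v : T.V} (h : T.Desc u v) :
    T.leavesBelow u ⊆ T.leavesBelow v := by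
  intro l hl
  simp only [leavesBelow, Finset.mem_filter, Finset.mem_univ, true_and] at *
  exact desc_trans hl h

lemma mem_leavesBelow {l : T.Leaf} {v : T.V} :
    l ∈ T.leavesBelow v ↔ T.Desc l.1 v := by
  simp [leavesBelow]

lemma leavesBelow_leaf {v : T.V} (hv : T.IsLeaf v) :
    T.leavesBelow v = {⟨v, hv⟩} := by
  ext l
  simp only [mem_leavesBelow, Finset.mem_singleton]
  constructor
  · intro h; exact Finset.mem_singleton.mpr (Subtype.ext (leaf_desc hv h))
  · intro hl; rw [Finset.mem_singleton.mp hl]; exact desc_refl v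

lemma siblings_not_desc {v c1 c2 : T.V} (h1 : T.parent c1 = v) (h1v : c1 ≠ v)
    (h2 : T.parent c2 = v) (h2v : c2 ≠ v) (hne : c1 ≠ c2) : ¬ T.Desc c1 c2 := by
  rintro ⟨k, hk⟩
  have hk1 : 1 ≤ k := by
    rcases Nat.eq_zero_or_pos k with h0 | h0
    · exact absurd (by simpa [h0] using hk) hne
    · exact h0
  have hstep : T.parent^[k-1] v = c2 := by
    have : T.parent^[(k-1)+1] c1 = c2 := by
      have : k - 1 + 1 = k := by omega
      rw [this]; exact hk
    rw [Function.iterate_succ_apply, h1] at this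
    exact this
  have hcyc : T.parent^[(k-1)+1] v = v := by
    rw [Function.iterate_succ_apply', hstep, h2]
  have hvroot : v = T.root := eq_root_of_cycle (by omega) hcyc
  have : c2 = T.root := by rw [← hstep, hvroot, iterate_root]
  exact h2v (this.trans hvroot.symm)

lemma desc_child {v c : T.V} (hc : T.parent c = v) : T.Desc c v := ⟨1, by simp [hc]⟩

/-- Structure of children at a non-leaf vertex of a binary tree. -/
lemma children_spec (hT : T.IsBinary) {v : T.V} (hv : ¬ T.IsLeaf v) :
    ∃ c1 c2 : T.V, c1 ≠ c2 ∧ T.parent c1 = v ∧ c1 ≠ v ∧ T.parent c2 = v ∧ c2 ≠ v ∧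
      (∀ u, T.parent u = v → u ≠ v → u = c1 ∨ u = c2) := by
  have hcard := hT v hv
  obtain ⟨c1, c2, hne, hset⟩ := Finset.card_eq_two.mp hcard
  have hmem : ∀ u : T.V, (T.parent u = v ∧ u ≠ v) ↔ (u = c1 ∨ u = c2) := by
    intro u
    constructor
    · intro hu
      have : u ∈ (Finset.univ.filter fun u => T.parent u = v ∧ u ≠ v) := by
        simp [hu.1, hu.2]
      rw [hset] at this
      simpa using this
    · intro hu
      have : u ∈ ({c1, c2} : Finset T.V) := by simpa using hu
      rw [← hset] at this
      simpa using this
  have hc1 := (hmem c1).mpr (Or.inl rfl)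
  have hc2 := (hmem c2).mpr (Or.inr rfl)
  exact ⟨c1, c2, hne, hc1.1, hc1.2, hc2.1, hc2.2, fun u h1 h2 => (hmem u).mp ⟨h1, h2⟩⟩

lemma children_desc_disjoint {v c1 c2 : T.V} (h1 : T.parent c1 = v) (h1v : c1 ≠ v)
    (h2 : T.parent c2 = v) (h2v : c2 ≠ v) (hne : c1 ≠ c2) {x : T.V}
    (hx1 : T.Desc x c1) (hx2 : T.Desc x c2) : False := by
  rcases desc_comparable hx1 hx2 with h | h
  · exact siblings_not_desc h1 h1v h2 h2v hne h
  · exact siblings_not_desc h2 h2v h1 h1v hne.symm h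

lemma leavesBelow_union {v c1 c2 : T.V} (hv : ¬ T.IsLeaf v)
    (h1 : T.parent c1 = v) (h1v : c1 ≠ v) (h2 : T.parent c2 = v) (h2v : c2 ≠ v)
    (hch : ∀ u, T.parent u = v → u ≠ v → u = c1 ∨ u = c2) :
    T.leavesBelow v = T.leavesBelow c1 ∪ T.leavesBelow c2 := by
  ext l
  simp only [mem_leavesBelow, Finset.mem_union]
  constructor
  · intro hl
    have hlv : l.1 ≠ v := fun h => hv (h ▸ l.2)
    obtain ⟨c, hcp, hcv, hdesc⟩ := first_hit hl hlv
    rcases hch c hcp hcv with rfl | rfl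
    · exact Or.inl hdesc
    · exact Or.inr hdesc
  · rintro (h | h)
    · exact desc_trans h (desc_child h1)
    · exact desc_trans h (desc_child h2)

lemma leavesBelow_disj {v c1 c2 : T.V} (h1 : T.parent c1 = v) (h1v : c1 ≠ v)
    (h2 : T.parent c2 = v) (h2v : c2 ≠ v) (hne : c1 ≠ c2) :
    Disjoint (T.leavesBelow c1) (T.leavesBelow c2) := by
  rw [Finset.disjoint_left]
  intro l hl1 hl2
  rw [mem_leavesBelow] at hl1 hl2
  exact children_desc_disjoint h1 h1v h2 h2v hne hl1 hl2

section Gsum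

variable {G : Type} [AddCommGroup G] [Fintype G]

lemma gsum_congr {g g' : T.Leaf → G} {v : T.V}
    (h : ∀ l : T.Leaf, T.Desc l.1 v → g l = g' l) : T.gsum g v = T.gsum g' v := by
  unfold gsum
  exact Finset.sum_congr rfl fun l hl => h l (mem_leavesBelow.mp hl)

lemma gsum_split {v c1 c2 : T.V} (hv : ¬ T.IsLeaf v)
    (h1 : T.parent c1 = v) (h1v : c1 ≠ v) (h2 : T.parent c2 = v) (h2v : c2 ≠ v)
    (hne : c1 ≠ c2) (hch : ∀ u, T.parent u = v → u ≠ v → u = c1 ∨ u = c2)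
    (g : T.Leaf → G) : T.gsum g v = T.gsum g c1 + T.gsum g c2 := by
  unfold gsum
  rw [leavesBelow_union hv h1 h1v h2 h2v hch,
    Finset.sum_union (leavesBelow_disj h1 h1v h2 h2v hne)]

lemma gsum_leaf (g : T.Leaf → G) (l : T.Leaf) : T.gsum g l.1 = g l := by
  unfold gsum
  rw [leavesBelow_leaf l.2]
  exact Finset.sum_singleton _ _

end Gsum
section Patch

variable {G : Type} [AddCommGroup G] [Fintype G]

/-- Replace the values of `a` below `v` by those of `b`. -/
noncomputable def patch (T : PhyloTree) (v : T.V) (a b : T.Leaf → G) : T.Leaf → G :=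
  fun l => if T.Desc l.1 v then b l else a l

lemma patch_of_not_desc {v : T.V} {a b : T.Leaf → G} {l : T.Leaf}
    (h : ¬ T.Desc l.1 v) : T.patch v a b l = a l := if_neg h

lemma gsum_patch_of_desc {v e : T.V} (a b : T.Leaf → G) (h : T.Desc e v) :
    T.gsum (T.patch v a b) e = T.gsum b e := by
  apply gsum_congr
  intro l hl
  exact if_pos (desc_trans hl h)

lemma gsum_patch_of_not_desc {v e : T.V} {a b : T.Leaf → G}
    (hab : T.gsum a v = T.gsum b v) (h : ¬ T.Desc e v) :
    T.gsum (T.patch v a b) e = T.gsum a e := by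
  by_cases hve : T.Desc v e
  · -- v strictly below e : split the sum
    have hsub : T.leavesBelow v ⊆ T.leavesBelow e := leavesBelow_mono hve
    have hsplit : T.leavesBelow e = T.leavesBelow v ∪ (T.leavesBelow e \ T.leavesBelow v) :=
      (Finset.union_sdiff_of_subset hsub).symm
    have hdisj : Disjoint (T.leavesBelow v) (T.leavesBelow e \ T.leavesBelow v) :=
      Finset.disjoint_sdiff
    unfold gsum
    rw [hsplit, Finset.sum_union hdisj, Finset.sum_union hdisj]
    congr 1
    · have e1 : ∑ l ∈ T.leavesBelow v, T.patch v a b l = ∑ l ∈ T.leavesBelow v, b l :=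
        Finset.sum_congr rfl fun l hl => if_pos (mem_leavesBelow.mp hl)
      rw [e1]
      exact hab.symm
    · exact Finset.sum_congr rfl fun l hl => by
        have : ¬ T.Desc l.1 v := fun hd => (Finset.mem_sdiff.mp hl).2 (mem_leavesBelow.mpr hd)
        exact if_neg this
  · -- incomparable : no leaf below e is below v
    apply gsum_congr
    intro l hl
    apply if_neg
    intro hlv
    rcases desc_comparable hl hlv with hc | hc
    · exact h hc
    · exact hve hc

end Patch
section Alg

/-- Exponent vector of the image monomial of `q_g`. -/
noncomputable def Bv (g : T.Leaf → ZMod 2) : (T.V × ZMod 2) →₀ ℕ :=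
  ∑ e : T.V, Finsupp.single (e, T.gsum g e) 1

lemma Bv_apply (g : T.Leaf → ZMod 2) (e : T.V) (b : ZMod 2) :
    Bv (T := T) g (e, b) = if T.gsum g e = b then 1 else 0 := by
  unfold Bv
  rw [Finsupp.finset_sum_apply]
  rw [Finset.sum_eq_single e]
  · rw [Finsupp.single_apply]
    by_cases h : T.gsum g e = b
    · simp [h]
    · simp [h, Prod.ext_iff]
  · intro e' _ hne
    exact Finsupp.single_eq_of_ne' (by simp [Prod.ext_iff]; intro h; exact absurd h hne)
  · intro h; exact absurd (Finset.mem_univ e) h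

lemma prod_X_eq_monomial {σ' : Type} (s : Finset T.V) (f : T.V → σ') :
    (∏ i ∈ s, (X (f i) : MvPolynomial σ' ℂ)) =
      monomial (∑ i ∈ s, Finsupp.single (f i) 1) 1 := by
  classical
  induction s using Finset.induction with
  | empty => simp
  | insert _ _ hnotmem ih =>
    rw [Finset.prod_insert hnotmem, Finset.sum_insert hnotmem, ih]
    rw [show (X (f _) : MvPolynomial σ' ℂ) = monomial (Finsupp.single (f _) 1) 1 from rfl]
    rw [monomial_mul, one_mul]

lemma phiX (g : T.Leaf → ZMod 2) :
    T.Phi (id : ZMod 2 → ZMod 2) (X g) = monomial (Bv (T := T) g) 1 := by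
  rw [Phi, aeval_X]
  exact prod_X_eq_monomial Finset.univ _

/-- The squarefree monomial associated to a multiset of leaf labelings. -/
noncomputable def monM (M : Multiset (T.Leaf → ZMod 2)) :
    MvPolynomial (T.Leaf → ZMod 2) ℂ := (M.map X).prod

lemma monM_zero : monM (T := T) 0 = 1 := rfl

lemma monM_cons (g : T.Leaf → ZMod 2) (M : Multiset (T.Leaf → ZMod 2)) :
    monM (g ::ₘ M) = X g * monM M := by
  simp [monM]

lemma phi_monM (M : Multiset (T.Leaf → ZMod 2)) :
    T.Phi (id : ZMod 2 → ZMod 2) (monM M) = monomial ((M.map (Bv (T := T))).sum) 1 := by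
  induction M using Multiset.induction with
  | empty => simp [monM_zero]
  | cons g M ih =>
    rw [monM_cons, map_mul, phiX, ih, monomial_mul, one_mul, Multiset.map_cons,
      Multiset.sum_cons]

/-- The number of elements of `M` whose `σ_e`-value is `b`. -/
noncomputable def cnt (e : T.V) (b : ZMod 2) (M : Multiset (T.Leaf → ZMod 2)) : ℕ :=
  M.countP fun g => T.gsum g e = b

lemma cnt_cons (e : T.V) (b : ZMod 2) (g : T.Leaf → ZMod 2)
    (M : Multiset (T.Leaf → ZMod 2)) :
    cnt e b (g ::ₘ M) = cnt e b M + if T.gsum g e = b then 1 else 0 := by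
  unfold cnt
  rw [Multiset.countP_cons]

lemma cnt_zero (e : T.V) (b : ZMod 2) : cnt (T := T) e b 0 = 0 := rfl

lemma sum_Bv_apply (M : Multiset (T.Leaf → ZMod 2)) (e : T.V) (b : ZMod 2) :
    ((M.map (Bv (T := T))).sum) (e, b) = cnt e b M := by
  induction M using Multiset.induction with
  | empty => simp [cnt_zero]
  | cons g M ih =>
    rw [Multiset.map_cons, Multiset.sum_cons, Finsupp.add_apply, Bv_apply, ih, cnt_cons]
    omega

lemma card_eq_cnt (e : T.V) (M : Multiset (T.Leaf → ZMod 2)) :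
    Multiset.card M = cnt e 0 M + cnt e 1 M := by
  induction M using Multiset.induction with
  | empty => simp [cnt_zero]
  | cons g M ih =>
    rw [Multiset.card_cons, cnt_cons, cnt_cons, ih]
    have h2 : ∀ x : ZMod 2, x = 0 ∨ x = 1 := by decide
    rcases h2 (T.gsum g e) with h | h <;> simp [h] <;> omega

/-- One quadratic move. -/
def StepRel (M N : Multiset (T.Leaf → ZMod 2)) : Prop :=
  ∃ g h g' h' M₀, M = g ::ₘ h ::ₘ M₀ ∧ N = g' ::ₘ h' ::ₘ M₀ ∧
    Bv (T := T) g + Bv h = Bv g' + Bv h'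

lemma StepRel.cnt_eq {M N : Multiset (T.Leaf → ZMod 2)} (h : StepRel M N)
    (e : T.V) (b : ZMod 2) : cnt e b M = cnt e b N := by
  obtain ⟨g1, g2, g3, g4, M₀, rfl, rfl, hB⟩ := h
  have happ := congrArg (fun f : (T.V × ZMod 2) →₀ ℕ => f (e, b)) hB
  simp only [Finsupp.add_apply, Bv_apply] at happ
  rw [cnt_cons, cnt_cons, cnt_cons, cnt_cons]
  omega

lemma StepRel.card_eq {M N : Multiset (T.Leaf → ZMod 2)} (h : StepRel M N) :
    Multiset.card M = Multiset.card N := by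
  obtain ⟨g1, g2, g3, g4, M₀, rfl, rfl, _⟩ := h
  simp

lemma StepRel.cons {M N : Multiset (T.Leaf → ZMod 2)} (h : StepRel M N)
    (x : T.Leaf → ZMod 2) : StepRel (x ::ₘ M) (x ::ₘ N) := by
  obtain ⟨g1, g2, g3, g4, M₀, rfl, rfl, hB⟩ := h
  refine ⟨g1, g2, g3, g4, x ::ₘ M₀, ?_, ?_, hB⟩
  · rw [Multiset.cons_swap x g1, Multiset.cons_swap x g2]
  · rw [Multiset.cons_swap x g3, Multiset.cons_swap x g4]

lemma chain_cnt_eq {M N : Multiset (T.Leaf → ZMod 2)}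
    (h : Relation.ReflTransGen (StepRel (T := T)) M N) (e : T.V) (b : ZMod 2) :
    cnt e b M = cnt e b N := by
  induction h with
  | refl => rfl
  | tail _h hstep ih => exact ih.trans (hstep.cnt_eq e b)

lemma chain_cons {M N : Multiset (T.Leaf → ZMod 2)}
    (h : Relation.ReflTransGen (StepRel (T := T)) M N) (x : T.Leaf → ZMod 2) :
    Relation.ReflTransGen (StepRel (T := T)) (x ::ₘ M) (x ::ₘ N) := by
  induction h with
  | refl => exact Relation.ReflTransGen.refl
  | tail _h hstep ih => exact ih.tail (hstep.cons x)

end Alg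
section Span

/-- The set of degree-2 homogeneous invariants. -/
def QS (T : PhyloTree) : Set (MvPolynomial (T.Leaf → ZMod 2) ℂ) :=
  {p | p ∈ T.idealTL (id : ZMod 2 → ZMod 2) ∧ p.IsHomogeneous 2}

lemma quad_mem_QS {g1 g2 g3 g4 : T.Leaf → ZMod 2}
    (hB : Bv (T := T) g1 + Bv g2 = Bv g3 + Bv g4) :
    (X g1 * X g2 - X g3 * X g4 : MvPolynomial (T.Leaf → ZMod 2) ℂ) ∈ QS T := by
  constructor
  · rw [idealTL, RingHom.mem_ker]
    show T.Phi (id : ZMod 2 → ZMod 2) (X g1 * X g2 - X g3 * X g4) = 0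
    rw [map_sub, map_mul, map_mul, phiX, phiX, phiX, phiX, monomial_mul, monomial_mul,
      one_mul, hB, sub_self]
  · have h := ((isHomogeneous_X ℂ g1).mul (isHomogeneous_X ℂ g2)).sub
      ((isHomogeneous_X ℂ g3).mul (isHomogeneous_X ℂ g4))
    norm_num at h
    exact h

lemma step_sub_mem {M N : Multiset (T.Leaf → ZMod 2)} (h : StepRel M N) :
    monM M - monM N ∈ Ideal.span (QS T) := by
  obtain ⟨g1, g2, g3, g4, M₀, rfl, rfl, hB⟩ := h
  have key : monM (g1 ::ₘ g2 ::ₘ M₀) - monM (g3 ::ₘ g4 ::ₘ M₀)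
      = monM M₀ * (X g1 * X g2 - X g3 * X g4) := by
    rw [monM_cons, monM_cons, monM_cons, monM_cons]; ring
  rw [key]
  exact Ideal.mul_mem_left _ _ (Ideal.subset_span (quad_mem_QS hB))

lemma chain_sub_mem {M N : Multiset (T.Leaf → ZMod 2)}
    (h : Relation.ReflTransGen (StepRel (T := T)) M N) :
    monM M - monM N ∈ Ideal.span (QS T) := by
  induction h with
  | refl => simp
  | tail _h hstep ih =>
    have := Ideal.add_mem _ ih (step_sub_mem hstep)
    simpa using this

end Span
section Count

lemma zmod2_cancel_left {a y b : ZMod 2} (h : a + y = a + b) : y = b := by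
  exact add_left_cancel h

lemma zmod2_sum_ne {x y a b : ZMod 2} (hx : x ≠ a) (hy : y ≠ b) : x + y = a + b := by
  revert hx hy; revert x y a b; decide

lemma zmod2_third {x y z : ZMod 2} (h : x = y + z) : z = x + y := by
  revert h; revert x y z; decide

/-- The 2×2 contingency-table identity: the joint count is determined by the marginals. -/
lemma two_by_two {v c1 c2 : T.V}
    (hsplit : ∀ g : T.Leaf → ZMod 2, T.gsum g v = T.gsum g c1 + T.gsum g c2)
    (a b : ZMod 2) (M : Multiset (T.Leaf → ZMod 2)) :
    2 * M.countP (fun g => T.gsum g v = a ∧ T.gsum g c1 = b) + Multiset.card M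
      = cnt v a M + cnt c1 b M + cnt c2 (a + b) M := by
  induction M using Multiset.induction with
  | empty => simp [cnt_zero]
  | cons g M ih =>
    rw [Multiset.countP_cons, Multiset.card_cons, cnt_cons, cnt_cons, cnt_cons]
    have hz : T.gsum g c2 = T.gsum g v + T.gsum g c1 := zmod2_third (hsplit g)
    by_cases h1 : T.gsum g v = a <;> by_cases h2 : T.gsum g c1 = b
    · have h3 : T.gsum g c2 = a + b := by rw [hz, h1, h2]
      simp only [h1, h2, h3, and_self, if_true]
      omega
    · have h3 : T.gsum g c2 ≠ a + b := by
        rw [hz, h1]; intro he; exact h2 (zmod2_cancel_left he)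
      simp only [h1, h2, h3, and_false, if_false, if_true]
      omega
    · have h3 : T.gsum g c2 ≠ a + b := by
        rw [hz, h2]
        intro he
        exact h1 (add_right_cancel he)
      simp only [h1, h2, h3, false_and, if_false, if_true]
      omega
    · have h3 : T.gsum g c2 = a + b := by rw [hz]; exact zmod2_sum_ne h1 h2
      simp only [h1, h2, h3, false_and, if_false, if_true]
      omega

end Count
section Fix

lemma Bv_patch_swap {v : T.V} {a b : T.Leaf → ZMod 2} (hab : T.gsum a v = T.gsum b v) :
    Bv (T := T) a + Bv b = Bv (T.patch v a b) + Bv (T.patch v b a) := by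
  unfold Bv
  rw [← Finset.sum_add_distrib, ← Finset.sum_add_distrib]
  apply Finset.sum_congr rfl
  intro e _
  by_cases hd : T.Desc e v
  · rw [gsum_patch_of_desc a b hd, gsum_patch_of_desc b a hd]
    exact add_comm _ _
  · rw [gsum_patch_of_not_desc hab hd, gsum_patch_of_not_desc hab.symm hd]

lemma fixBelow (hT : T.IsBinary) {N : Multiset (T.Leaf → ZMod 2)}
    {t : T.Leaf → ZMod 2} (htN : t ∈ N) :
    ∀ n : ℕ, ∀ v : T.V, (Finset.univ.filter fun u => T.Desc u v).card ≤ n →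
    ∀ (g : T.Leaf → ZMod 2) (M₀ : Multiset (T.Leaf → ZMod 2)),
    (∀ e b, cnt e b (g ::ₘ M₀) = cnt e b N) →
    T.gsum g v = T.gsum t v →
    ∃ g' M₀', Relation.ReflTransGen (StepRel (T := T)) (g ::ₘ M₀) (g' ::ₘ M₀') ∧
      (∀ u, T.Desc u v → T.gsum g' u = T.gsum t u) ∧
      (∀ l : T.Leaf, ¬ T.Desc l.1 v → g' l = g l) := by
  intro n
  induction n with
  | zero =>
    intro v hv
    exfalso
    have : v ∈ Finset.univ.filter fun u => T.Desc u v := by simp [desc_refl]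
    have := Finset.card_pos.mpr ⟨v, this⟩
    omega
  | succ n ih =>
    intro v hcard g M₀ hcnt hgv
    by_cases hleaf : T.IsLeaf v
    · refine ⟨g, M₀, Relation.ReflTransGen.refl, ?_, fun _ _ => rfl⟩
      intro u hu
      rw [leaf_desc hleaf hu]
      exact hgv
    · obtain ⟨c1, c2, hne, hp1, hv1, hp2, hv2, hch⟩ := children_spec hT hleaf
      have hsplit : ∀ x : T.Leaf → ZMod 2, T.gsum x v = T.gsum x c1 + T.gsum x c2 :=
        fun x => gsum_split hleaf hp1 hv1 hp2 hv2 hne hch x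
      have hchildcard : ∀ c, T.parent c = v → c ≠ v →
          (Finset.univ.filter fun u => T.Desc u c).card ≤ n := by
        intro c hcp hcv
        have hss : (Finset.univ.filter fun u => T.Desc u c)
            ⊂ (Finset.univ.filter fun u => T.Desc u v) := by
          constructor
          · intro u hu
            simp only [Finset.mem_filter, Finset.mem_univ, true_and] at *
            exact desc_trans hu (desc_child hcp)
          · intro hsub
            have : v ∈ Finset.univ.filter fun u => T.Desc u c := by
              apply hsub; simp [desc_refl]
            simp only [Finset.mem_filter, Finset.mem_univ, true_and] at this
            exact child_not_anc hcp hcv this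
        have := Finset.card_lt_card hss
        omega
      have hdisj : ∀ l : T.Leaf, ¬ (T.Desc l.1 c1 ∧ T.Desc l.1 c2) := by
        rintro l ⟨ha, hb⟩
        exact children_desc_disjoint hp1 hv1 hp2 hv2 hne ha hb
      -- Stage 1 : adjust the value at c1 (hence at c2) by one quadratic move
      have hex : ∃ gm Mm, Relation.ReflTransGen (StepRel (T := T)) (g ::ₘ M₀) (gm ::ₘ Mm) ∧
          T.gsum gm v = T.gsum t v ∧ T.gsum gm c1 = T.gsum t c1 ∧
          (∀ l : T.Leaf, ¬ T.Desc l.1 v → gm l = g l) := by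
        by_cases hc1 : T.gsum g c1 = T.gsum t c1
        · exact ⟨g, M₀, Relation.ReflTransGen.refl, hgv, hc1, fun _ _ => rfl⟩
        · have hM := two_by_two hsplit (T.gsum t v) (T.gsum t c1) (g ::ₘ M₀)
          have hN := two_by_two hsplit (T.gsum t v) (T.gsum t c1) N
          have hcardMN : Multiset.card (g ::ₘ M₀) = Multiset.card N := by
            rw [card_eq_cnt T.root, card_eq_cnt T.root, hcnt, hcnt]
          rw [hcnt, hcnt, hcnt, hcardMN] at hM
          have hcc : (g ::ₘ M₀).countP
                (fun x => T.gsum x v = T.gsum t v ∧ T.gsum x c1 = T.gsum t c1)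
              = N.countP (fun x => T.gsum x v = T.gsum t v ∧ T.gsum x c1 = T.gsum t c1) := by
            omega
          have hpos : 0 < N.countP
              (fun x => T.gsum x v = T.gsum t v ∧ T.gsum x c1 = T.gsum t c1) :=
            Multiset.countP_pos.mpr ⟨t, htN, ⟨rfl, rfl⟩⟩
          rw [← hcc] at hpos
          obtain ⟨g'', hg''M, hg''⟩ := Multiset.countP_pos.mp hpos
          have hgg : g'' ≠ g := by
            intro heq
            rw [heq] at hg''
            exact hc1 hg''.2
          have hg''M₀ : g'' ∈ M₀ := by
            rcases Multiset.mem_cons.mp hg''M with heq | hmem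
            · exact absurd heq hgg
            · exact hmem
          have hgv'' : T.gsum g v = T.gsum g'' v := hgv.trans hg''.1.symm
          refine ⟨T.patch v g g'', T.patch v g'' g ::ₘ M₀.erase g'', ?_, ?_, ?_, ?_⟩
          · apply Relation.ReflTransGen.single
            exact ⟨g, g'', T.patch v g g'', T.patch v g'' g, M₀.erase g'',
              by rw [Multiset.cons_erase hg''M₀], rfl, Bv_patch_swap hgv''⟩
          · rw [gsum_patch_of_desc g g'' (desc_refl v)]
            exact hg''.1
          · rw [gsum_patch_of_desc g g'' (desc_child hp1)]
            exact hg''.2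
          · intro l hl
            exact patch_of_not_desc hl
      obtain ⟨gm, Mm, hchain1, hgmv, hgmc1, hgm_off⟩ := hex
      have hcnt1 : ∀ e b, cnt e b (gm ::ₘ Mm) = cnt e b N :=
        fun e b => (chain_cnt_eq hchain1 e b).symm.trans (hcnt e b)
      -- Stage 2 : recurse below c1
      obtain ⟨g', M', hchain2, hdesc1, hoff1⟩ :=
        ih c1 (hchildcard c1 hp1 hv1) gm Mm hcnt1 hgmc1
      have hgc2m : T.gsum gm c2 = T.gsum t c2 := by
        have e1 := zmod2_third (hsplit gm)
        have e2 := zmod2_third (hsplit t)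
        rw [e1, e2, hgmv, hgmc1]
      have hgc2' : T.gsum g' c2 = T.gsum t c2 := by
        have e1 : T.gsum g' c2 = T.gsum gm c2 := by
          apply gsum_congr
          intro l hl
          exact hoff1 l (fun hd => hdisj l ⟨hd, hl⟩)
        rw [e1]; exact hgc2m
      have hcnt2 : ∀ e b, cnt e b (g' ::ₘ M') = cnt e b N :=
        fun e b => (chain_cnt_eq hchain2 e b).symm.trans (hcnt1 e b)
      -- Stage 3 : recurse below c2
      obtain ⟨g''', M'', hchain3, hdesc2, hoff2⟩ :=
        ih c2 (hchildcard c2 hp2 hv2) g' M' hcnt2 hgc2'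
      refine ⟨g''', M'', (hchain1.trans hchain2).trans hchain3, ?_, ?_⟩
      · intro u hu
        have hc1fix : T.gsum g''' c1 = T.gsum t c1 := by
          have e1 : T.gsum g''' c1 = T.gsum g' c1 := by
            apply gsum_congr
            intro l hl
            exact hoff2 l (fun hd => hdisj l ⟨hl, hd⟩)
          rw [e1]
          exact hdesc1 c1 (desc_refl c1)
        by_cases huv : u = v
        · subst huv
          rw [hsplit g''', hsplit t, hc1fix, hdesc2 c2 (desc_refl c2)]
        · obtain ⟨c, hcp, hcv, hdc⟩ := first_hit hu huv
          rcases hch c hcp hcv with rfl | rfl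
          · have e1 : T.gsum g''' u = T.gsum g' u := by
              apply gsum_congr
              intro l hl
              exact hoff2 l (fun hd2 => hdisj l ⟨desc_trans hl hdc, hd2⟩)
            rw [e1]
            exact hdesc1 u hdc
          · exact hdesc2 u hdc
      · intro l hl
        have h1 : ¬ T.Desc l.1 c1 := fun hd => hl (desc_trans hd (desc_child hp1))
        have h2 : ¬ T.Desc l.1 c2 := fun hd => hl (desc_trans hd (desc_child hp2))
        rw [hoff2 l h2, hoff1 l h1, hgm_off l hl]

end Fix
section Connect

lemma chain_card_eq {M N : Multiset (T.Leaf → ZMod 2)}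
    (h : Relation.ReflTransGen (StepRel (T := T)) M N) :
    Multiset.card M = Multiset.card N := by
  induction h with
  | refl => rfl
  | tail _h hstep ih => exact ih.trans hstep.card_eq

lemma connect (hT : T.IsBinary) :
    ∀ (k : ℕ) (M N : Multiset (T.Leaf → ZMod 2)), Multiset.card M = k →
    Multiset.card N = k → (∀ e b, cnt e b M = cnt e b N) →
    Relation.ReflTransGen (StepRel (T := T)) M N := by
  intro k
  induction k with
  | zero =>
    intro M N hM hN _
    rw [Multiset.card_eq_zero] at hM hN
    rw [hM, hN]
  | succ k ih =>
    intro M N hM hN hcnt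
    have hNpos : 0 < Multiset.card N := by omega
    obtain ⟨t, htN⟩ := Multiset.card_pos_iff_exists_mem.mp hNpos
    have hpos : 0 < cnt T.root (T.gsum t T.root) M := by
      rw [hcnt]
      exact Multiset.countP_pos.mpr ⟨t, htN, rfl⟩
    obtain ⟨g, hgM, hg⟩ := Multiset.countP_pos.mp hpos
    have hMg : M = g ::ₘ M.erase g := (Multiset.cons_erase hgM).symm
    have hcnt' : ∀ e b, cnt e b (g ::ₘ M.erase g) = cnt e b N := by
      intro e b; rw [← hMg]; exact hcnt e b
    obtain ⟨g', M₀', hchain, hdesc, _hoff⟩ :=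
      fixBelow hT htN ((Finset.univ.filter fun u => T.Desc u T.root).card) T.root
        le_rfl g (M.erase g) hcnt' hg
    have hg't : g' = t := by
      funext l
      have := hdesc l.1 (desc_root l.1)
      rwa [gsum_leaf, gsum_leaf] at this
    subst hg't
    have hNt : N = g' ::ₘ N.erase g' := (Multiset.cons_erase htN).symm
    have hchain' : Relation.ReflTransGen (StepRel (T := T)) M (g' ::ₘ M₀') := by
      rw [hMg]; exact hchain
    have hcnt2 : ∀ e b, cnt e b M₀' = cnt e b (N.erase g') := by
      intro e b
      have h1 : cnt e b (g' ::ₘ M₀') = cnt e b (g' ::ₘ N.erase g') := by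
        rw [← hNt, ← chain_cnt_eq hchain' e b]
        exact hcnt e b
      rw [cnt_cons, cnt_cons] at h1
      omega
    have hcard1 : Multiset.card M₀' = k := by
      have := chain_card_eq hchain'
      rw [hM] at this
      simp only [Multiset.card_cons] at this
      omega
    have hcard2 : Multiset.card (N.erase g') = k := by
      rw [Multiset.card_erase_of_mem htN, hN]
      rfl
    have := ih M₀' (N.erase g') hcard1 hcard2 hcnt2
    exact hchain'.trans ((chain_cons this g').trans (by rw [← hNt]))

end Connect

section Final

lemma monM_eq_monomial (M : Multiset (T.Leaf → ZMod 2)) :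
    monM M = monomial M.toFinsupp (1 : ℂ) := by
  induction M using Multiset.induction with
  | empty => simp [monM_zero, Multiset.toFinsupp_zero]
  | cons g M ih =>
    rw [monM_cons, ih, ← Multiset.singleton_add, Multiset.toFinsupp_add,
      Multiset.toFinsupp_singleton]
    rw [show (X g : MvPolynomial (T.Leaf → ZMod 2) ℂ) = monomial (Finsupp.single g 1) 1
      from rfl, monomial_mul, one_mul]

/-- The image exponent vector of the monomial with exponent `u`. -/
noncomputable def Aexp (u : (T.Leaf → ZMod 2) →₀ ℕ) : (T.V × ZMod 2) →₀ ℕ :=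
  ((Finsupp.toMultiset u).map (Bv (T := T))).sum

lemma phi_monomial (u : (T.Leaf → ZMod 2) →₀ ℕ) (c : ℂ) :
    T.Phi (id : ZMod 2 → ZMod 2) (monomial u c) = monomial (Aexp (T := T) u) c := by
  have h1 : (monomial u c : MvPolynomial (T.Leaf → ZMod 2) ℂ)
      = C c * monomial u 1 := by rw [C_mul_monomial, mul_one]
  have h2 : (monomial u (1:ℂ) : MvPolynomial (T.Leaf → ZMod 2) ℂ)
      = monM (Finsupp.toMultiset u) := by
    rw [monM_eq_monomial, Finsupp.toMultiset_toFinsupp]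
  rw [h1, h2, map_mul, phi_monM]
  rw [show (T.Phi (id : ZMod 2 → ZMod 2)) (C c) = C c by
    simp [Phi, MvPolynomial.algHom_C, map_C]]
  rw [C_mul_monomial, mul_one]
  rfl

lemma binom_mem_span (hT : T.IsBinary) {u w : (T.Leaf → ZMod 2) →₀ ℕ}
    (hA : Aexp (T := T) u = Aexp (T := T) w) :
    (monomial u 1 - monomial w 1 : MvPolynomial (T.Leaf → ZMod 2) ℂ)
      ∈ Ideal.span (QS T) := by
  set M := Finsupp.toMultiset u with hMdef
  set N := Finsupp.toMultiset w with hNdef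
  have hB : (M.map (Bv (T := T))).sum = (N.map (Bv (T := T))).sum := hA
  have hcnt : ∀ e b, cnt e b M = cnt e b N := by
    intro e b
    rw [← sum_Bv_apply, ← sum_Bv_apply, hB]
  have hcard : Multiset.card N = Multiset.card M := by
    rw [card_eq_cnt T.root, card_eq_cnt T.root, hcnt, hcnt]
  have hchain := connect hT (Multiset.card M) M N rfl hcard hcnt
  have := chain_sub_mem hchain
  rw [monM_eq_monomial, monM_eq_monomial, hMdef, hNdef,
    Finsupp.toMultiset_toFinsupp, Finsupp.toMultiset_toFinsupp] at this
  exact this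

lemma ker_le_span (hT : T.IsBinary) :
    ∀ (n : ℕ) (p : MvPolynomial (T.Leaf → ZMod 2) ℂ), p.support.card ≤ n →
    p ∈ T.idealTL (id : ZMod 2 → ZMod 2) → p ∈ Ideal.span (QS T) := by
  intro n
  induction n with
  | zero =>
    intro p hcard _
    have : p.support = ∅ := Finset.card_eq_zero.mp (by omega)
    rw [support_eq_empty.mp this]
    exact Ideal.zero_mem _
  | succ n ih =>
    intro p hcard hker
    by_cases h0 : p = 0
    · rw [h0]; exact Ideal.zero_mem _
    · have hphi : T.Phi (id : ZMod 2 → ZMod 2) p = 0 := by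
        rw [idealTL, RingHom.mem_ker] at hker
        exact hker
      obtain ⟨u, hu⟩ := Finset.nonempty_iff_ne_empty.mpr
        (fun h => h0 (support_eq_empty.mp h))
      have hcoeff : ∀ m : (T.V × ZMod 2) →₀ ℕ,
          (0 : ℂ) = ∑ w ∈ p.support, if Aexp (T := T) w = m then coeff w p else 0 := by
        intro m
        have h3 := congrArg (fun q => coeff m (T.Phi (id : ZMod 2 → ZMod 2) q)) (as_sum p)
        simp only [map_sum, coeff_sum, phi_monomial, coeff_monomial] at h3
        rw [hphi, coeff_zero] at h3
        exact h3
      have hpartner : ∃ w ∈ p.support, w ≠ u ∧ Aexp (T := T) w = Aexp (T := T) u := by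
        by_contra hno
        push_neg at hno
        have := hcoeff (Aexp (T := T) u)
        rw [Finset.sum_eq_single_of_mem u hu] at this
        · simp only [if_pos rfl] at this
          exact (mem_support_iff.mp hu) this.symm
        · intro w hw hwu
          rw [if_neg (hno w hw hwu)]
      obtain ⟨w, hwsup, hwu, hAw⟩ := hpartner
      set c := coeff u p with hc
      set d := (monomial u 1 - monomial w 1 : MvPolynomial (T.Leaf → ZMod 2) ℂ) with hd
      have hdspan : d ∈ Ideal.span (QS T) := binom_mem_span hT hAw.symm
      have hdker : T.Phi (id : ZMod 2 → ZMod 2) d = 0 := by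
        rw [hd, map_sub, phi_monomial, phi_monomial, hAw, sub_self]
      set p' := p - C c * d with hp'
      have hp'ker : p' ∈ T.idealTL (id : ZMod 2 → ZMod 2) := by
        rw [idealTL, RingHom.mem_ker]
        show T.Phi (id : ZMod 2 → ZMod 2) p' = 0
        rw [hp', map_sub, map_mul, hdker, mul_zero, sub_zero, hphi]
      have hsub : p'.support ⊆ p.support.erase u := by
        intro x hx
        rw [mem_support_iff] at hx
        have hxu : x ≠ u := by
          rintro rfl
          apply hx
          rw [hp', coeff_sub, coeff_C_mul, hd, coeff_sub, coeff_monomial, if_pos rfl,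
            coeff_monomial, if_neg hwu, ← hc]
          ring
        refine Finset.mem_erase.mpr ⟨hxu, ?_⟩
        by_cases hxw : x = w
        · subst hxw
          exact hwsup
        · rw [mem_support_iff]
          intro hpx
          apply hx
          rw [hp', coeff_sub, coeff_C_mul, hd, coeff_sub, coeff_monomial,
            if_neg (fun h => hxu h.symm), coeff_monomial, if_neg (fun h => hxw h.symm), hpx]
          ring
      have hcard' : p'.support.card ≤ n := by
        have h1 := Finset.card_le_card hsub
        have h2 := Finset.card_erase_of_mem hu
        have h3 := Finset.card_pos.mpr ⟨u, hu⟩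
        omega
      have hmem' := ih p' hcard' hp'ker
      have : p = p' + C c * d := by rw [hp']; ring
      rw [this]
      exact Ideal.add_mem _ hmem' (Ideal.mul_mem_left _ _ hdspan)

end Final
end PhyloTree

/-- **Theorem (Jukes–Cantor binary model).** For `G = ℤ/2ℤ` with the identity labeling,
the ideal `I_{T,L}` of any binary rooted tree `T` is generated by the homogeneous
polynomials of degree `2` that it contains. -/
theorem jukesCantorBinary_ideal_generated_in_degree_two
    (T : PhyloTree) (hT : T.IsBinary) :
    T.idealTL (id : ZMod 2 → ZMod 2) =
      Ideal.span {p : MvPolynomial (T.Leaf → ZMod 2) ℂ |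
        p ∈ T.idealTL (id : ZMod 2 → ZMod 2) ∧ p.IsHomogeneous 2} := by
  apply le_antisymm
  · intro p hp
    exact PhyloTree.ker_le_span hT p.support.card p le_rfl hp
  · rw [Ideal.span_le]
    intro p hp
    exact hp.1
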